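/- For ε ∈ (0,1) and t ∈ ℝ, define k_ε(t) = -2d(d+2)/H^{d-1}(S^{d-1}) · ε^{-d-2} · (∫_{B_ε^{-t}} h_d dh) · 1_{(0,ε)}(t), where B_ε^{-t} = {h ∈ B_ε(0) ⊂ ℝ^d : h_d < -t} and h_d denotes the last coordinate of h. Then for every ε ∈ (0,1): k_ε ≥ 0, ∫_ℝ k_ε(t) dt = 1, and for every δ > 0, ∫_{|t| > δ} k_ε(t) dt → 0 as ε → 0⁺. In other words, (k_ε) is an approximate identity at 0. -/

import Mathlib

open MeasureTheory Filter

/-- Surface measure of the unit sphere `S^{d-1}` in `ℝ^d`. -/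
noncomputable def sphereArea (d : ℕ) : ℝ :=
  d * Real.pi ^ ((d : ℝ) / 2) / Real.Gamma ((d : ℝ) / 2 + 1)

/-- The kernel `k_ε` of the approximate identity. Here `d = n + 1`. -/
noncomputable def kFun (n : ℕ) (ε t : ℝ) : ℝ :=
  -2 * (n + 1 : ℝ) * ((n + 1 : ℝ) + 2) / sphereArea (n + 1) * ε ^ (-(n + 1 : ℝ) - 2) *
    (∫ h in {h : EuclideanSpace ℝ (Fin (n + 1)) | ‖h‖ < ε ∧ h (Fin.last n) < -t},
      h (Fin.last n)) * Set.indicator (Set.Ioo 0 ε) (fun _ => (1 : ℝ)) t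

open Set

lemma coord_abs_le_norm {n : ℕ} (h : EuclideanSpace ℝ (Fin (n+1))) (i : Fin (n+1)) :
    |h i| ≤ ‖h‖ := by
  rw [EuclideanSpace.norm_eq]
  have h1 : ‖h i‖^2 ≤ ∑ j, ‖h j‖^2 :=
    Finset.single_le_sum (f := fun j => ‖h j‖^2) (fun j _ => sq_nonneg _) (Finset.mem_univ i)
  have := Real.sqrt_le_sqrt h1
  rwa [Real.sqrt_sq_eq_abs, abs_norm, Real.norm_eq_abs] at this

lemma contL {n : ℕ} : Continuous (fun h : EuclideanSpace ℝ (Fin (n+1)) => h (Fin.last n)) :=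
  (EuclideanSpace.proj (Fin.last n)).continuous

lemma measS {n : ℕ} (ε t : ℝ) :
    MeasurableSet {h : EuclideanSpace ℝ (Fin (n+1)) | ‖h‖ < ε ∧ h (Fin.last n) < -t} := by
  exact (measurableSet_lt measurable_norm measurable_const).inter
    (measurableSet_lt contL.measurable measurable_const)

lemma integrableOn_ball_cont {n : ℕ} {f : EuclideanSpace ℝ (Fin (n+1)) → ℝ} (hf : Continuous f)
    (ε : ℝ) : IntegrableOn f (Metric.ball (0 : EuclideanSpace ℝ (Fin (n+1))) ε) :=
  (hf.continuousOn.integrableOn_compact (isCompact_closedBall 0 ε)).mono_set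
    Metric.ball_subset_closedBall

lemma integral_normsq_ball (n : ℕ) {ε : ℝ} (hε : 0 < ε) :
    ∫ h in Metric.ball (0 : EuclideanSpace ℝ (Fin (n+1))) ε, ‖h‖^2 =
      ((n:ℝ)+1) * (volume (Metric.ball (0 : EuclideanSpace ℝ (Fin (n+1))) 1)).toReal *
        ε^(n+3) / ((n:ℝ)+3) := by
  have h1 : ∫ h in Metric.ball (0 : EuclideanSpace ℝ (Fin (n+1))) ε, ‖h‖^2 =
      ∫ h : EuclideanSpace ℝ (Fin (n+1)), (Set.Iio ε).indicator (fun y => y^2) ‖h‖ := by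
    rw [← integral_indicator measurableSet_ball]
    congr 1; ext h
    by_cases hh : ‖h‖ < ε <;>
      simp [Set.indicator, Metric.mem_ball, dist_zero_right, hh]
  rw [h1, MeasureTheory.integral_fun_norm_addHaar]
  have hfr : Module.finrank ℝ (EuclideanSpace ℝ (Fin (n+1))) = n + 1 :=
    finrank_euclideanSpace_fin
  rw [hfr]
  have h2 : ∫ y in Set.Ioi (0:ℝ), y ^ (n + 1 - 1) • (Set.Iio ε).indicator (fun y => y^2) y
      = ε^(n+3) / ((n:ℝ)+3) := by
    have e1 : ∀ y : ℝ, y ^ (n + 1 - 1) • (Set.Iio ε).indicator (fun y => y^2) y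
        = (Set.Iio ε).indicator (fun y => y^(n+2)) y := by
      intro y
      by_cases hy : y < ε <;> simp [Set.indicator, hy, smul_eq_mul] <;> ring
    simp_rw [e1]
    rw [setIntegral_indicator measurableSet_Iio, Set.Ioi_inter_Iio]
    rw [← MeasureTheory.integral_Ioc_eq_integral_Ioo,
      ← intervalIntegral.integral_of_le hε.le, integral_pow]
    push_cast; ring
  rw [h2, nsmul_eq_mul, smul_eq_mul]
  push_cast; simp only [measureReal_def]; ring

lemma integral_coordsq_ball (n : ℕ) (ε : ℝ) (i : Fin (n+1)) :
    ∫ h in Metric.ball (0 : EuclideanSpace ℝ (Fin (n+1))) ε, (h i)^2 =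
      ∫ h in Metric.ball (0 : EuclideanSpace ℝ (Fin (n+1))) ε, (h (Fin.last n))^2 := by
  set e : EuclideanSpace ℝ (Fin (n+1)) ≃ₗᵢ[ℝ] EuclideanSpace ℝ (Fin (n+1)) :=
    LinearIsometryEquiv.piLpCongrLeft 2 ℝ ℝ (Equiv.swap i (Fin.last n)) with he
  have hmp := e.measurePreserving
  have hemb : MeasurableEmbedding e := e.toHomeomorph.measurableEmbedding
  have hpre : e ⁻¹' (Metric.ball (0 : EuclideanSpace ℝ (Fin (n+1))) ε) =
      Metric.ball (0 : EuclideanSpace ℝ (Fin (n+1))) ε := by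
    ext h
    simp [Metric.mem_ball, dist_zero_right, e.norm_map]
  have := hmp.setIntegral_preimage_emb hemb
    (fun h : EuclideanSpace ℝ (Fin (n+1)) => (h i)^2)
    (Metric.ball (0 : EuclideanSpace ℝ (Fin (n+1))) ε)
  rw [hpre] at this
  rw [← this]
  apply setIntegral_congr_fun measurableSet_ball
  intro h _
  have heval : (e h) i = h (Fin.last n) := by
    rw [he]
    simp only [LinearIsometryEquiv.piLpCongrLeft_apply, Equiv.piCongrLeft'_apply,
      Equiv.symm_symm_apply]
    rw [Equiv.symm_swap, Equiv.swap_apply_left]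
  dsimp only
  rw [heval]

lemma integral_lastsq_ball (n : ℕ) {ε : ℝ} (hε : 0 < ε) :
    ∫ h in Metric.ball (0 : EuclideanSpace ℝ (Fin (n+1))) ε, (h (Fin.last n))^2 =
      (∫ h in Metric.ball (0 : EuclideanSpace ℝ (Fin (n+1))) ε, ‖h‖^2) / ((n:ℝ)+1) := by
  have hsum : ∫ h in Metric.ball (0 : EuclideanSpace ℝ (Fin (n+1))) ε, ‖h‖^2 =
      ∑ i : Fin (n+1), ∫ h in Metric.ball (0 : EuclideanSpace ℝ (Fin (n+1))) ε, (h i)^2 := by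
    rw [← integral_finset_sum]
    · apply setIntegral_congr_fun measurableSet_ball
      intro h _
      dsimp only
      rw [EuclideanSpace.norm_eq, Real.sq_sqrt (by positivity)]
      simp [sq_abs]
    · intro i _
      exact integrableOn_ball_cont ((EuclideanSpace.proj i).continuous.pow 2) ε
  rw [hsum]
  have : ∀ i : Fin (n+1),
      ∫ h in Metric.ball (0 : EuclideanSpace ℝ (Fin (n+1))) ε, (h i)^2 =
      ∫ h in Metric.ball (0 : EuclideanSpace ℝ (Fin (n+1))) ε, (h (Fin.last n))^2 :=
    integral_coordsq_ball n ε
  rw [Finset.sum_congr rfl (fun i _ => this i), Finset.sum_const, Finset.card_univ,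
    Fintype.card_fin]
  field_simp
  rw [nsmul_eq_mul]; push_cast; ring

lemma sq_max_add_sq_max (a : ℝ) : (max (-a) 0)^2 + (max a 0)^2 = a^2 := by
  rcases le_total a 0 with ha | ha
  · rw [max_eq_left (by linarith), max_eq_right ha, neg_pow]; ring
  · rw [max_eq_right (by linarith), max_eq_left ha]; ring

lemma integral_maxsq_ball (n : ℕ) (ε : ℝ) :
    ∫ h in Metric.ball (0 : EuclideanSpace ℝ (Fin (n+1))) ε, (max (-(h (Fin.last n))) 0)^2 =
      (∫ h in Metric.ball (0 : EuclideanSpace ℝ (Fin (n+1))) ε, (h (Fin.last n))^2) / 2 := by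
  have hrefl : ∫ h in Metric.ball (0 : EuclideanSpace ℝ (Fin (n+1))) ε,
      (max (-(h (Fin.last n))) 0)^2 =
      ∫ h in Metric.ball (0 : EuclideanSpace ℝ (Fin (n+1))) ε, (max (h (Fin.last n)) 0)^2 := by
    rw [← integral_indicator measurableSet_ball, ← integral_indicator measurableSet_ball]
    rw [← integral_neg_eq_self
      (fun h : EuclideanSpace ℝ (Fin (n+1)) =>
        (Metric.ball (0 : EuclideanSpace ℝ (Fin (n+1))) ε).indicator
          (fun h => (max (-(h (Fin.last n))) 0)^2) h) volume]
    congr 1; ext h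
    by_cases hh : h ∈ Metric.ball (0 : EuclideanSpace ℝ (Fin (n+1))) ε
    · have hh' : -h ∈ Metric.ball (0 : EuclideanSpace ℝ (Fin (n+1))) ε := by
        simpa [Metric.mem_ball, dist_zero_right] using hh
      simp only [Set.indicator_of_mem hh, Set.indicator_of_mem hh']
      simp
    · have hh' : -h ∉ Metric.ball (0 : EuclideanSpace ℝ (Fin (n+1))) ε := by
        simpa [Metric.mem_ball, dist_zero_right] using hh
      simp only [Set.indicator_of_notMem hh, Set.indicator_of_notMem hh']
  have hI1 : IntegrableOn (fun h : EuclideanSpace ℝ (Fin (n+1)) => (max (-(h (Fin.last n))) 0)^2)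
      (Metric.ball (0 : EuclideanSpace ℝ (Fin (n+1))) ε) :=
    integrableOn_ball_cont ((contL.neg.max continuous_const).pow 2) ε
  have hI2 : IntegrableOn (fun h : EuclideanSpace ℝ (Fin (n+1)) => (max (h (Fin.last n)) 0)^2)
      (Metric.ball (0 : EuclideanSpace ℝ (Fin (n+1))) ε) :=
    integrableOn_ball_cont ((contL.max continuous_const).pow 2) ε
  have hadd : ∫ h in Metric.ball (0 : EuclideanSpace ℝ (Fin (n+1))) ε,
      ((max (-(h (Fin.last n))) 0)^2 + (max (h (Fin.last n)) 0)^2) =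
      ∫ h in Metric.ball (0 : EuclideanSpace ℝ (Fin (n+1))) ε, (h (Fin.last n))^2 := by
    apply setIntegral_congr_fun measurableSet_ball
    intro h _
    exact sq_max_add_sq_max _
  rw [integral_add hI1 hI2, ← hrefl] at hadd
  linarith

lemma fubini_kI (n : ℕ) {ε : ℝ} (hε : 0 < ε) :
    ∫ t in Set.Ioo (0:ℝ) ε,
      (∫ h in {h : EuclideanSpace ℝ (Fin (n + 1)) | ‖h‖ < ε ∧ h (Fin.last n) < -t},
        h (Fin.last n)) =
    -∫ h in Metric.ball (0 : EuclideanSpace ℝ (Fin (n+1))) ε,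
        (max (-(h (Fin.last n))) 0)^2 := by
  set E := EuclideanSpace ℝ (Fin (n+1))
  set L : E → ℝ := fun h => h (Fin.last n) with hL
  set F : ℝ → E → ℝ := fun t h => (Set.Ioo (0:ℝ) ε).indicator (fun _ => (1:ℝ)) t *
    Set.indicator {h : E | ‖h‖ < ε ∧ L h < -t} L h with hF
  set T : Set (ℝ × E) := {p | (0 < p.1 ∧ p.1 < ε) ∧ ‖p.2‖ < ε ∧ L p.2 < -p.1} with hT
  have hTm : MeasurableSet T := by
    apply MeasurableSet.inter
    · exact ((measurableSet_lt measurable_const measurable_fst).inter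
        (measurableSet_lt measurable_fst measurable_const))
    · exact ((measurableSet_lt (measurable_norm.comp measurable_snd) measurable_const).inter
        (measurableSet_lt (contL.measurable.comp measurable_snd) measurable_fst.neg))
  have hFeq : Function.uncurry F = T.indicator (fun p => L p.2) := by
    funext p
    simp only [Function.uncurry, hF, hT, Set.indicator, Set.mem_Ioo, Set.mem_setOf_eq]
    split_ifs <;> simp_all <;> (rename_i h1 h2; linarith [h2.2.2])
  have hInt : Integrable (Function.uncurry F) (volume.prod volume) := by
    rw [hFeq, integrable_indicator_iff hTm]
    apply Measure.integrableOn_of_bounded (M := ε)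
    · apply ne_top_of_le_ne_top _ (measure_mono (show T ⊆ Set.Ioo (0:ℝ) ε ×ˢ Metric.ball (0:E) ε
        from fun p hp => ⟨⟨hp.1.1, hp.1.2⟩, by
          simpa [Metric.mem_ball, dist_zero_right] using hp.2.1⟩))
      rw [Measure.prod_prod]
      exact ENNReal.mul_ne_top (by simp [Real.volume_Ioo]) measure_ball_lt_top.ne
    · exact ((contL.comp continuous_snd).aestronglyMeasurable)
    · refine (ae_restrict_iff' hTm).2 (ae_of_all _ fun p hp => ?_)
      rw [Real.norm_eq_abs]
      exact le_of_lt (lt_of_le_of_lt (coord_abs_le_norm p.2 _) hp.2.1)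
  have hinner : ∀ t : ℝ, ∫ h, F t h =
      (Set.Ioo (0:ℝ) ε).indicator
        (fun t => ∫ h in {h : E | ‖h‖ < ε ∧ L h < -t}, L h) t := by
    intro t
    by_cases ht : t ∈ Set.Ioo (0:ℝ) ε
    · rw [Set.indicator_of_mem ht]
      simp only [hF, Set.indicator_of_mem ht, one_mul]
      exact integral_indicator (measS ε t)
    · rw [Set.indicator_of_notMem ht]
      simp only [hF, Set.indicator_of_notMem ht, zero_mul]
      exact integral_zero _ _
  have hLHS : ∫ t in Set.Ioo (0:ℝ) ε,
      (∫ h in {h : E | ‖h‖ < ε ∧ L h < -t}, L h) = ∫ t : ℝ, ∫ h : E, F t h := by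
    rw [← integral_indicator measurableSet_Ioo]
    congr 1; ext t
    rw [hinner t]
  have houter : ∀ h : E, ∫ t : ℝ, F t h =
      (Metric.ball (0:E) ε).indicator (fun h => -(max (-(L h)) 0)^2) h := by
    intro h
    by_cases hb : ‖h‖ < ε
    · have hmem : h ∈ Metric.ball (0:E) ε := by
        simpa [Metric.mem_ball, dist_zero_right] using hb
      rw [Set.indicator_of_mem hmem]
      have habs : -(L h) ≤ ε := le_of_lt (lt_of_le_of_lt (le_trans (neg_le_abs _)
        (coord_abs_le_norm h _)) hb)
      have hfe : (fun t => F t h) =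
          (Set.Ioo (0:ℝ) (min ε (-(L h)))).indicator (fun _ => L h) := by
        funext t
        simp only [hF, Set.indicator, Set.mem_Ioo, Set.mem_setOf_eq, lt_min_iff]
        by_cases h1 : 0 < t ∧ t < ε
        · by_cases h2 : L h < -t
          · rw [if_pos h1, if_pos ⟨hb, h2⟩, if_pos ⟨h1.1, h1.2, by linarith⟩, one_mul]
          · rw [if_pos h1, if_neg (fun hc => h2 hc.2), mul_zero, if_neg]
            intro hc
            exact h2 (by linarith [hc.2.2])
        · rw [if_neg h1, zero_mul, if_neg]
          intro hc
          exact h1 ⟨hc.1, hc.2.1⟩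
      rw [hfe, integral_indicator_const _ measurableSet_Ioo, measureReal_def, Real.volume_Ioo,
        smul_eq_mul, sub_zero, ENNReal.toReal_ofReal']
      rcases le_total (L h) 0 with hc | hc
      · rw [min_eq_right habs, max_eq_left (neg_nonneg.mpr hc)]
        ring
      · rw [min_eq_right (le_trans (neg_nonpos.mpr hc) hε.le),
          max_eq_right (neg_nonpos.mpr hc)]
        ring
    · have hmem : h ∉ Metric.ball (0:E) ε := by
        simpa [Metric.mem_ball, dist_zero_right] using hb
      rw [Set.indicator_of_notMem hmem]
      have : (fun t => F t h) = fun _ => 0 := by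
        funext t
        simp only [hF, Set.indicator, Set.mem_setOf_eq, Set.mem_Ioo]
        rw [if_neg (fun hc : ‖h‖ < ε ∧ L h < -t => hb hc.1), mul_zero]
      rw [this, integral_zero]
  calc ∫ t in Set.Ioo (0:ℝ) ε, (∫ h in {h : E | ‖h‖ < ε ∧ L h < -t}, L h)
      = ∫ t : ℝ, ∫ h : E, F t h := hLHS
    _ = ∫ h : E, ∫ t : ℝ, F t h := integral_integral_swap hInt
    _ = ∫ h : E, (Metric.ball (0:E) ε).indicator (fun h => -(max (-(L h)) 0)^2) h := by
        congr 1; ext h; rw [houter h]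
    _ = ∫ h in Metric.ball (0:E) ε, -(max (-(L h)) 0)^2 := integral_indicator measurableSet_ball
    _ = -∫ h in Metric.ball (0:E) ε, (max (-(L h)) 0)^2 := integral_neg _

lemma ballVol_eq (n : ℕ) :
    (volume (Metric.ball (0 : EuclideanSpace ℝ (Fin (n+1))) 1)).toReal =
      Real.sqrt Real.pi ^ (n+1) / Real.Gamma (((n:ℝ)+1)/2 + 1) := by
  rw [EuclideanSpace.volume_ball]
  rw [Fintype.card_fin, ENNReal.ofReal_one, one_pow, one_mul,
    ENNReal.toReal_ofReal (by positivity)]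
  norm_num

lemma rpow_half_pow (n : ℕ) : Real.pi ^ (((n:ℝ)+1)/2) = Real.sqrt Real.pi ^ (n+1) := by
  rw [Real.sqrt_eq_rpow, ← Real.rpow_natCast (Real.pi ^ ((1:ℝ)/2)) (n+1),
    ← Real.rpow_mul Real.pi_pos.le]
  congr 1
  push_cast
  ring

lemma sphereArea_pos (n : ℕ) : 0 < sphereArea (n+1) := by
  unfold sphereArea
  apply div_pos
  · apply mul_pos (by positivity)
    exact Real.rpow_pos_of_pos Real.pi_pos _
  · exact Real.Gamma_pos_of_pos (by positivity)

lemma sphereArea_eq (n : ℕ) :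
    sphereArea (n+1) =
      ((n:ℝ)+1) * (volume (Metric.ball (0 : EuclideanSpace ℝ (Fin (n+1))) 1)).toReal := by
  rw [ballVol_eq, ← rpow_half_pow]
  unfold sphereArea
  push_cast
  ring

lemma kFun_nonneg (n : ℕ) {ε : ℝ} (hε : 0 < ε) (t : ℝ) : 0 ≤ kFun n ε t := by
  unfold kFun
  by_cases ht : t ∈ Set.Ioo (0:ℝ) ε
  · rw [Set.indicator_of_mem ht, mul_one]
    have hI : (∫ h in {h : EuclideanSpace ℝ (Fin (n + 1)) | ‖h‖ < ε ∧ h (Fin.last n) < -t},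
        h (Fin.last n)) ≤ 0 := by
      apply setIntegral_nonpos (measS ε t)
      intro h hh
      have := ht.1
      linarith [hh.2]
    have hc : -2 * ((n:ℝ) + 1) * (((n:ℝ) + 1) + 2) / sphereArea (n + 1) *
        ε ^ (-((n:ℝ) + 1) - 2) ≤ 0 := by
      apply mul_nonpos_iff.mpr
      refine Or.inr ⟨?_, (Real.rpow_pos_of_pos hε _).le⟩
      apply div_nonpos_of_nonpos_of_nonneg _ (sphereArea_pos n).le
      nlinarith [Nat.cast_nonneg (α := ℝ) n]
    exact mul_nonneg_iff.mpr (Or.inr ⟨hc, hI⟩)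
  · rw [Set.indicator_of_notMem ht, mul_zero]

lemma kFun_integral (n : ℕ) {ε : ℝ} (hε : 0 < ε) : (∫ t : ℝ, kFun n ε t) = 1 := by
  set E := EuclideanSpace ℝ (Fin (n+1))
  set B := (volume (Metric.ball (0 : E) 1)).toReal with hB
  have hBpos : 0 < B :=
    ENNReal.toReal_pos (Metric.measure_ball_pos volume _ one_pos).ne' measure_ball_lt_top.ne
  set c : ℝ := -2 * ((n:ℝ) + 1) * (((n:ℝ) + 1) + 2) / sphereArea (n + 1) *
    ε ^ (-((n:ℝ) + 1) - 2) with hc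
  set kI : ℝ → ℝ := fun t =>
    ∫ h in {h : E | ‖h‖ < ε ∧ h (Fin.last n) < -t}, h (Fin.last n) with hkI
  have hval : ∫ t in Set.Ioo (0:ℝ) ε, kI t = -(B * ε^(n+3)) / (2*((n:ℝ)+3)) := by
    rw [hkI]
    rw [fubini_kI n hε, integral_maxsq_ball n ε, integral_lastsq_ball n hε,
      integral_normsq_ball n hε, ← hB]
    field_simp
  have hfun : ∀ t : ℝ, kFun n ε t = (Set.Ioo (0:ℝ) ε).indicator (fun t => c * kI t) t := by
    intro t
    unfold kFun
    by_cases ht : t ∈ Set.Ioo (0:ℝ) ε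
    · rw [Set.indicator_of_mem ht, Set.indicator_of_mem ht, mul_one, hc, hkI]
    · rw [Set.indicator_of_notMem ht, Set.indicator_of_notMem ht, mul_zero]
  have h1 : (∫ t : ℝ, kFun n ε t) = c * ∫ t in Set.Ioo (0:ℝ) ε, kI t := by
    simp_rw [hfun]
    rw [integral_indicator measurableSet_Ioo]
    exact MeasureTheory.integral_const_mul c _
  rw [h1, hval, hc, sphereArea_eq n, ← hB]
  have hεpow : ε ^ (-((n:ℝ) + 1) - 2) = (ε^(n+3))⁻¹ := by
    have he : (-((n:ℝ)+1)-2) = -(((n+3 : ℕ)):ℝ) := by push_cast; ring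
    rw [he, Real.rpow_neg hε.le, Real.rpow_natCast]
  rw [hεpow]
  have hεne : (ε:ℝ)^(n+3) ≠ 0 := by positivity
  field_simp
  ring

/-- `(k_ε)` is an approximate identity at `0`. -/
theorem kFun_approximate_identity (n : ℕ) :
    (∀ ε ∈ Set.Ioo (0 : ℝ) 1, (∀ t : ℝ, 0 ≤ kFun n ε t) ∧ (∫ t : ℝ, kFun n ε t) = 1) ∧
    (∀ δ > (0 : ℝ), Tendsto (fun ε : ℝ => ∫ t in {t : ℝ | δ < |t|}, kFun n ε t)
      (nhdsWithin 0 (Set.Ioi 0)) (nhds 0)) := by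
  constructor
  · intro ε hε
    exact ⟨kFun_nonneg n hε.1, kFun_integral n hε.1⟩
  · intro δ hδ
    have hzero : ∀ ε ∈ Set.Ioc (0:ℝ) δ, ∫ t in {t : ℝ | δ < |t|}, kFun n ε t = 0 := by
      intro ε hε
      have : ∀ t ∈ {t : ℝ | δ < |t|}, kFun n ε t = 0 := by
        intro t ht
        have hnot : t ∉ Set.Ioo (0:ℝ) ε := by
          intro hmem
          have h1 : |t| = t := abs_of_pos hmem.1
          have := hε.2
          simp only [Set.mem_setOf_eq] at ht
          have := hmem.2
          linarith [ht, h1 ▸ ht]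
        unfold kFun
        rw [Set.indicator_of_notMem hnot, mul_zero]
      calc ∫ t in {t : ℝ | δ < |t|}, kFun n ε t
          = ∫ t in {t : ℝ | δ < |t|}, (0:ℝ) := by
            apply setIntegral_congr_fun
            · exact measurableSet_lt measurable_const (measurable_id.abs)
            · exact this
        _ = 0 := integral_zero _ _
    have hev : (fun ε : ℝ => ∫ t in {t : ℝ | δ < |t|}, kFun n ε t) =ᶠ[nhdsWithin 0 (Set.Ioi 0)]
        fun _ => (0:ℝ) := by
      filter_upwards [Ioc_mem_nhdsGT_of_mem ⟨le_refl (0:ℝ), hδ⟩] with ε hε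
      exact hzero ε hε
    exact Tendsto.congr' hev.symm tendsto_const_nhds
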